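/- Let M = 2^(2λ) with λ ≥ 2 (M > 4), let S be the square M-QAM signal set, Γ_CI(S) its clustering independent region, and C_M = {α + β·i : α, β ∈ ℤ, |α| ≤ √M - 1, |β| ≤ √M - 1, max(|α|, |β|) = √M - 1}. Then every z ∈ Γ_CI(S) with 0 < |z| ≤ 1 satisfies, for every c ∈ C_M, the inequality |z - conj(c)/(|c|² - 1)| ≥ 1/(|c|² - 1); that is, the interior clustering-independent region is contained in the intersection of the exteriors of the circles obtained by complex inversion (centers conj(c)/(|c|² - 1) and radii 1/(|c|² - 1)) of the unit circles centered at the points of C_M. -/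

import Mathlib

/-- For square `M`-QAM with `M = 2^(2λ) > 4`, every `z` in the
clustering independent region `Γ_CI(S)` with `0 < |z| ≤ 1` lies, for every `c ∈ C_M`,
in the exterior of the circle with center `conj(c)/(|c|² - 1)` and radius
`1/(|c|² - 1)` (the complex inversion of the unit circle centered at `c`). -/
theorem qam_interior_clustering_independent_region (l : ℕ) (hl : 2 ≤ l)
    (S : Finset ℂ)
    (hS : S = ((Finset.range (2 ^ l)) ×ˢ (Finset.range (2 ^ l))).image
      (fun p : ℕ × ℕ =>
        (2 * (p.1 : ℂ) - ((2 : ℂ) ^ l - 1)) + (2 * (p.2 : ℂ) - ((2 : ℂ) ^ l - 1)) * Complex.I))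
    (ΔS : Finset ℂ)
    (hΔS : ΔS = (S ×ˢ S).image (fun p : ℂ × ℂ => p.1 - p.2))
    (Γ : Set ℂ)
    (hΓ : Γ = {z : ℂ | ∀ d ∈ ΔS, ∀ d' ∈ ΔS, ¬(d = 0 ∧ d' = 0) →
      min 2 (‖z‖ * 2) ≤ ‖d + z * d'‖})
    (C : Set ℂ)
    (hC : C = {c : ℂ | ∃ α β : ℤ, c = (α : ℂ) + (β : ℂ) * Complex.I ∧
      |α| ≤ 2 ^ l - 1 ∧ |β| ≤ 2 ^ l - 1 ∧ max |α| |β| = 2 ^ l - 1}) :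
    ∀ z ∈ Γ, 0 < ‖z‖ → ‖z‖ ≤ 1 → ∀ c ∈ C,
      1 / (‖c‖ ^ 2 - 1) ≤
        ‖z - ((starRingEnd ℂ) c) / (((‖c‖ ^ 2 - 1 : ℝ)) : ℂ)‖ := by
  intro z hz hz0 hz1 c hc
  rw [hC] at hc
  obtain ⟨α, β, hcab, hα, hβ, hmax⟩ := hc
  have h4 : (4 : ℤ) ≤ 2 ^ l := by
    calc (4 : ℤ) = 2 ^ 2 := by norm_num
    _ ≤ 2 ^ l := pow_le_pow_right₀ (by norm_num) hl
  -- membership in S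
  have hSmem : ∀ m n : ℕ, m < 2 ^ l → n < 2 ^ l →
      ((2 * (m : ℂ) - ((2 : ℂ) ^ l - 1)) + (2 * (n : ℂ) - ((2 : ℂ) ^ l - 1)) * Complex.I) ∈ S := by
    intro m n hm hn
    rw [hS]
    exact Finset.mem_image.2 ⟨(m, n), Finset.mem_product.2
      ⟨Finset.mem_range.2 hm, Finset.mem_range.2 hn⟩, rfl⟩
  -- membership in ΔS
  have hΔmem : ∀ a b : ℤ, |a| ≤ 2 ^ l - 1 → |b| ≤ 2 ^ l - 1 →
      ((2 * (a : ℂ)) + (2 * (b : ℂ)) * Complex.I) ∈ ΔS := by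
    intro a b ha hb
    rw [abs_le] at ha hb
    have hcast : ((2 ^ l : ℕ) : ℤ) = 2 ^ l := by push_cast; ring
    have hm1 : a.toNat < 2 ^ l := by omega
    have hm2 : (-a).toNat < 2 ^ l := by omega
    have hn1 : b.toNat < 2 ^ l := by omega
    have hn2 : (-b).toNat < 2 ^ l := by omega
    rw [hΔS]
    refine Finset.mem_image.2 ⟨(_, _), Finset.mem_product.2
      ⟨hSmem a.toNat b.toNat hm1 hn1, hSmem (-a).toNat (-b).toNat hm2 hn2⟩, ?_⟩
    have ha' : ((a.toNat : ℂ)) - (((-a).toNat : ℂ)) = (a : ℂ) := by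
      have h : ((a.toNat : ℤ)) - (((-a).toNat : ℤ)) = a := by omega
      exact_mod_cast congrArg (fun t : ℤ => (t : ℂ)) h
    have hb' : ((b.toNat : ℂ)) - (((-b).toNat : ℂ)) = (b : ℂ) := by
      have h : ((b.toNat : ℤ)) - (((-b).toNat : ℤ)) = b := by omega
      exact_mod_cast congrArg (fun t : ℤ => (t : ℂ)) h
    simp only []
    rw [← ha', ← hb']
    ring
  -- d = 2 and d' = -2c are in ΔS
  have h1Z : |(1 : ℤ)| ≤ 2 ^ l - 1 := by rw [abs_le]; omega
  have h0Z : |(0 : ℤ)| ≤ 2 ^ l - 1 := by rw [abs_le]; omega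
  have hd : (2 : ℂ) ∈ ΔS := by
    have := hΔmem 1 0 h1Z h0Z
    simpa using this
  have hd' : ((2 * ((-α : ℤ) : ℂ)) + (2 * ((-β : ℤ) : ℂ)) * Complex.I) ∈ ΔS :=
    hΔmem (-α) (-β) (by rwa [abs_neg]) (by rwa [abs_neg])
  -- apply the Γ condition
  rw [hΓ] at hz
  have hkey := hz 2 hd _ hd' (by simp)
  have hmin : min 2 (‖z‖ * 2) = ‖z‖ * 2 := by
    rw [min_eq_right]; nlinarith
  rw [hmin] at hkey
  have hfac : (2 : ℂ) + z * ((2 * ((-α : ℤ) : ℂ)) + (2 * ((-β : ℤ) : ℂ)) * Complex.I)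
      = 2 * (1 - z * c) := by
    rw [hcab]; push_cast; ring
  rw [hfac, norm_mul] at hkey
  simp only [Complex.norm_two] at hkey
  have key : ‖z‖ ≤ ‖1 - z * c‖ := by linarith
  -- square it
  have key2 : Complex.normSq z ≤ Complex.normSq (1 - z * c) := by
    rw [← Complex.sq_norm, ← Complex.sq_norm]
    exact pow_le_pow_left₀ (norm_nonneg z) key 2
  -- coordinates
  have hcre : c.re = (α : ℝ) := by rw [hcab]; simp
  have hcim : c.im = (β : ℝ) := by rw [hcab]; simp
  simp only [Complex.normSq_apply, Complex.sub_re, Complex.sub_im, Complex.mul_re,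
    Complex.mul_im, Complex.one_re, Complex.one_im] at key2
  -- |c|^2 = re^2 + im^2 and ρ > 0
  have habs : ‖c‖ ^ 2 = c.re ^ 2 + c.im ^ 2 := by
    rw [Complex.sq_norm, Complex.normSq_apply]; ring
  have h9Z : (9 : ℤ) ≤ α ^ 2 + β ^ 2 := by
    rcases max_choice |α| |β| with h | h
    · rw [h] at hmax
      nlinarith [sq_abs α, sq_abs β, sq_nonneg β, abs_nonneg β]
    · rw [h] at hmax
      nlinarith [sq_abs α, sq_abs β, sq_nonneg α, abs_nonneg α]
  have h9 : (9 : ℝ) ≤ c.re ^ 2 + c.im ^ 2 := by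
    rw [hcre, hcim]
    exact_mod_cast h9Z
  have hρ : (0 : ℝ) < ‖c‖ ^ 2 - 1 := by rw [habs]; linarith
  have hρne : ((‖c‖ ^ 2 - 1 : ℝ) : ℂ) ≠ 0 := by
    exact_mod_cast ne_of_gt hρ
  have hgoal : z - ((starRingEnd ℂ) c) / (((‖c‖ ^ 2 - 1 : ℝ)) : ℂ)
      = ((((‖c‖ ^ 2 - 1 : ℝ)) : ℂ) * z - (starRingEnd ℂ) c)
        / (((‖c‖ ^ 2 - 1 : ℝ)) : ℂ) := by
    rw [eq_div_iff hρne, sub_mul, div_mul_cancel₀ _ hρne]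
    ring
  rw [hgoal, norm_div]
  have habsρ : ‖(((‖c‖ ^ 2 - 1 : ℝ)) : ℂ)‖ = ‖c‖ ^ 2 - 1 := by
    rw [Complex.norm_real, Real.norm_eq_abs, abs_of_pos hρ]
  rw [habsρ]
  have h1A : (1 : ℝ) ≤ ‖((((‖c‖ ^ 2 - 1 : ℝ)) : ℂ) * z - (starRingEnd ℂ) c)‖ := by
    have hs : (1 : ℝ) ≤ Complex.normSq
        ((((‖c‖ ^ 2 - 1 : ℝ)) : ℂ) * z - (starRingEnd ℂ) c) := by
      simp only [Complex.normSq_apply, Complex.sub_re, Complex.sub_im, Complex.mul_re,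
        Complex.mul_im, Complex.ofReal_re, Complex.ofReal_im, Complex.conj_re, Complex.conj_im]
      rw [habs]
      nlinarith [mul_nonneg (by linarith : (0:ℝ) ≤ c.re ^ 2 + c.im ^ 2 - 1) (sub_nonneg.2 key2)]
    calc (1 : ℝ) = Real.sqrt 1 := Real.sqrt_one.symm
      _ ≤ Real.sqrt (Complex.normSq ((((‖c‖ ^ 2 - 1 : ℝ)) : ℂ) * z - (starRingEnd ℂ) c)) :=
          Real.sqrt_le_sqrt hs
      _ = _ := (Complex.norm_def _).symm
  gcongr
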